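/- Let L be a list of distinct keys, a a new key not in L, and L' = a :: L. For any pivot p in the recursion tree Q(L') with p < a, every key that lies in the left subtree of p in Q(L) also lies in the left subtree of p in Q(L'). Symmetrically, if p > a, every key in the right subtree of p in Q(L) also lies in the right subtree of p in Q(L'). -/

import Mathlib

/-- The list of inputs to all recursive calls (nodes of the recursion tree)
of head-pivot Quicksort on `L`. -/
def calls : List ℤ → List (List ℤ)
  | [] => []
  | h :: t =>
      (h :: t) :: (calls (t.filter (· < h)) ++ calls (t.filter (h < ·)))
termination_by L => L.length
decreasing_by
  all_goals simp [Nat.lt_succ_iff, List.length_filter_le]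
  all_goals exact (List.length_filter_le _ _).trans (le_of_eq (by simp))

/-- `k` lies in the left subtree of the node with pivot `p`
in the recursion tree of Quicksort on `L`. -/
def inLeft (L : List ℤ) (p k : ℤ) : Prop :=
  ∃ M ∈ calls L, M.head? = some p ∧ k ∈ M.tail.filter (· < p)

/-- `k` lies in the right subtree of the node with pivot `p`
in the recursion tree of Quicksort on `L`. -/
def inRight (L : List ℤ) (p k : ℤ) : Prop :=
  ∃ M ∈ calls L, M.head? = some p ∧ k ∈ M.tail.filter (p < ·)

lemma takeWhile_filter_comm (f : ℤ → Bool) (p : ℤ) (hfp : f p = true) :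
    ∀ t : List ℤ, p ∈ t →
      (t.filter f).takeWhile (· ≠ p) = (t.takeWhile (· ≠ p)).filter f := by
  intro t
  induction t with
  | nil => simp
  | cons h t ih =>
    intro hp
    simp only [ne_eq, decide_not] at ih ⊢
    by_cases hhp : h = p
    · subst hhp
      simp [List.filter_cons, hfp, List.takeWhile_cons]
    · have hp' : p ∈ t := by
        rcases List.mem_cons.1 hp with h1 | h1
        · exact absurd h1.symm hhp
        · exact h1
      by_cases hf : f h = true
      · simp [List.filter_cons, hf, List.takeWhile_cons, hhp, ih hp']
      · simp [List.filter_cons, hf, List.takeWhile_cons, hhp, ih hp']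

lemma charGen : ∀ (n : ℕ) (L : List ℤ), L.length ≤ n → L.Nodup → ∀ (f : ℤ → Bool) (p k : ℤ),
    ((∃ M ∈ calls L, M.head? = some p ∧ k ∈ M.tail.filter f) ↔
    (p ∈ L ∧ k ∈ L ∧ f k = true ∧ k ≠ p ∧
      ∀ k' ∈ L.takeWhile (· ≠ p), (k' < p → k' < k) ∧ (p < k' → k < k'))) := by
  intro n
  induction n with
  | zero =>
    intro L hL _ f p k
    have : L = [] := List.length_eq_zero_iff.1 (Nat.le_zero.1 hL)
    subst this
    simp [calls]
  | succ n ih =>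
    rintro (_ | ⟨h, t⟩) hL hnd f p k
    · simp [calls]
    · have hht : h ∉ t := (List.nodup_cons.1 hnd).1
      have hndt : t.Nodup := (List.nodup_cons.1 hnd).2
      have hlt : (t.filter (· < h)).length ≤ n :=
        le_trans (List.length_filter_le _ _) (Nat.succ_le_succ_iff.1 hL)
      have hgt : (t.filter (h < ·)).length ≤ n :=
        le_trans (List.length_filter_le _ _) (Nat.succ_le_succ_iff.1 hL)
      have hndlt : (t.filter (· < h)).Nodup := hndt.filter _
      have hndgt : (t.filter (h < ·)).Nodup := hndt.filter _
      rw [calls]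
      constructor
      · rintro ⟨M, hM, hhead, hk⟩
        rcases List.mem_cons.1 hM with rfl | hM
        · -- M = h :: t, so p = h
          have hph : p = h := by simpa using hhead.symm
          subst hph
          simp only [List.tail_cons, List.mem_filter] at hk
          have hkp : k ≠ p := fun e => hht (e ▸ hk.1)
          refine ⟨List.mem_cons_self, List.mem_cons_of_mem _ hk.1, hk.2, hkp, ?_⟩
          intro k' hk'
          rw [List.takeWhile_cons_of_neg (by simp)] at hk'
          simp at hk'
        · rcases List.mem_append.1 hM with hM | hM
          · -- M in left subtree calls
            have := (ih _ hlt hndlt f p k).1 ⟨M, hM, hhead, hk⟩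
            obtain ⟨hp1, hk1, hfk, hkp, hcond⟩ := this
            rw [List.mem_filter] at hp1 hk1
            have hph : p < h := by simpa using hp1.2
            have hkh : k < h := by simpa using hk1.2
            have hhp : h ≠ p := fun e => absurd (e ▸ hph) (lt_irrefl _)
            refine ⟨List.mem_cons_of_mem _ hp1.1, List.mem_cons_of_mem _ hk1.1, hfk, hkp, ?_⟩
            intro k' hk'
            rw [List.takeWhile_cons_of_pos (by simp [hhp])] at hk'
            rcases List.mem_cons.1 hk' with rfl | hk'
            · exact ⟨fun hlt' => absurd (lt_trans hlt' hph) (lt_irrefl _), fun _ => hkh⟩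
            · by_cases hk'h : k' < h
              · have : k' ∈ (t.filter (· < h)).takeWhile (· ≠ p) := by
                  rw [takeWhile_filter_comm _ p (by simpa using hph) t hp1.1]
                  rw [List.mem_filter]
                  exact ⟨hk', by simpa using hk'h⟩
                exact hcond k' this
              · refine ⟨fun hlt' => absurd (lt_trans hlt' hph) hk'h, fun _ => ?_⟩
                exact lt_of_lt_of_le hkh (not_lt.1 hk'h)
          · -- M in right subtree calls
            have := (ih _ hgt hndgt f p k).1 ⟨M, hM, hhead, hk⟩
            obtain ⟨hp1, hk1, hfk, hkp, hcond⟩ := this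
            rw [List.mem_filter] at hp1 hk1
            have hph : h < p := by simpa using hp1.2
            have hkh : h < k := by simpa using hk1.2
            have hhp : h ≠ p := fun e => absurd (e ▸ hph) (lt_irrefl _)
            refine ⟨List.mem_cons_of_mem _ hp1.1, List.mem_cons_of_mem _ hk1.1, hfk, hkp, ?_⟩
            intro k' hk'
            rw [List.takeWhile_cons_of_pos (by simp [hhp])] at hk'
            rcases List.mem_cons.1 hk' with rfl | hk'
            · exact ⟨fun _ => hkh, fun hlt' => absurd (lt_trans hph hlt') (lt_irrefl _)⟩
            · by_cases hk'h : h < k'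
              · have : k' ∈ (t.filter (h < ·)).takeWhile (· ≠ p) := by
                  rw [takeWhile_filter_comm _ p (by simpa using hph) t hp1.1]
                  rw [List.mem_filter]
                  exact ⟨hk', by simpa using hk'h⟩
                exact hcond k' this
              · refine ⟨fun _ => lt_of_le_of_lt (not_lt.1 hk'h) hkh,
                  fun hlt' => absurd (lt_trans hph hlt') hk'h⟩
      · rintro ⟨hpL, hkL, hfk, hkp, hcond⟩
        by_cases hph : p = h
        · subst hph
          refine ⟨p :: t, List.mem_cons_self, rfl, ?_⟩
          rw [List.tail_cons, List.mem_filter]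
          have hkt : k ∈ t := by
            rcases List.mem_cons.1 hkL with rfl | hk
            · exact absurd rfl hkp
            · exact hk
          exact ⟨hkt, hfk⟩
        · have hpt : p ∈ t := by
            rcases List.mem_cons.1 hpL with rfl | hp
            · exact absurd rfl hph
            · exact hp
          have hhcond := hcond h (by
            rw [List.takeWhile_cons_of_pos (by simp [Ne.symm hph])]
            exact List.mem_cons_self)
          have hcond' : ∀ k' ∈ t.takeWhile (· ≠ p), (k' < p → k' < k) ∧ (p < k' → k < k') := by
            intro k' hk'
            refine hcond k' ?_
            rw [List.takeWhile_cons_of_pos (by simp [Ne.symm hph])]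
            exact List.mem_cons_of_mem _ hk'
          rcases lt_or_gt_of_ne (fun e : h = p => hph e.symm) with hhp | hhp
          · -- h < p : go right
            have hhk : h < k := hhcond.1 hhp
            have hkt : k ∈ t := by
              rcases List.mem_cons.1 hkL with rfl | hk
              · exact absurd hhk (lt_irrefl _)
              · exact hk
            have hpg : p ∈ t.filter (h < ·) := List.mem_filter.2 ⟨hpt, by simpa using hhp⟩
            have hkg : k ∈ t.filter (h < ·) := List.mem_filter.2 ⟨hkt, by simpa using hhk⟩
            have hcg : ∀ k' ∈ (t.filter (h < ·)).takeWhile (· ≠ p),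
                (k' < p → k' < k) ∧ (p < k' → k < k') := by
              intro k' hk'
              rw [takeWhile_filter_comm _ p (by simpa using hhp) t hpt, List.mem_filter] at hk'
              exact hcond' k' hk'.1
            obtain ⟨M, hM, hh, hkM⟩ := (ih _ hgt hndgt f p k).2 ⟨hpg, hkg, hfk, hkp, hcg⟩
            exact ⟨M, List.mem_cons_of_mem _ (List.mem_append.2 (Or.inr hM)), hh, hkM⟩
          · -- p < h : go left
            have hkh : k < h := hhcond.2 hhp
            have hkt : k ∈ t := by
              rcases List.mem_cons.1 hkL with rfl | hk
              · exact absurd hkh (lt_irrefl _)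
              · exact hk
            have hpg : p ∈ t.filter (· < h) := List.mem_filter.2 ⟨hpt, by simpa using hhp⟩
            have hkg : k ∈ t.filter (· < h) := List.mem_filter.2 ⟨hkt, by simpa using hkh⟩
            have hcg : ∀ k' ∈ (t.filter (· < h)).takeWhile (· ≠ p),
                (k' < p → k' < k) ∧ (p < k' → k < k') := by
              intro k' hk'
              rw [takeWhile_filter_comm _ p (by simpa using hhp) t hpt, List.mem_filter] at hk'
              exact hcond' k' hk'.1
            obtain ⟨M, hM, hh, hkM⟩ := (ih _ hlt hndlt f p k).2 ⟨hpg, hkg, hfk, hkp, hcg⟩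
            exact ⟨M, List.mem_cons_of_mem _ (List.mem_append.2 (Or.inl hM)), hh, hkM⟩

/-- For `L' = a :: L` with `a` fresh: if `p < a` is a pivot of `Q(L')`, every
key in the left subtree of `p` in `Q(L)` is in the left subtree of `p` in
`Q(L')`; symmetrically for `p > a` and right subtrees. -/
theorem stmt1 (L : List ℤ) (hnd : L.Nodup) (a : ℤ) (ha : a ∉ L)
    (p k : ℤ) (hp : ∃ M ∈ calls (a :: L), M.head? = some p) :
    (p < a → inLeft L p k → inLeft (a :: L) p k) ∧
    (a < p → inRight L p k → inRight (a :: L) p k) := by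

  have hnd' : (a :: L).Nodup := List.nodup_cons.2 ⟨ha, hnd⟩
  constructor
  · intro hpa hL
    obtain ⟨hpL, hkL, hfk, hkp, hcond⟩ :=
      (charGen L.length L le_rfl hnd (fun x => decide (x < p)) p k).1 hL
    have hklt : k < p := by simpa using hfk
    refine (charGen (a :: L).length (a :: L) le_rfl hnd' (fun x => decide (x < p)) p k).2
      ⟨List.mem_cons_of_mem _ hpL, List.mem_cons_of_mem _ hkL, hfk, hkp, ?_⟩
    intro k' hk'
    have hap : a ≠ p := fun e => absurd (e ▸ hpa) (lt_irrefl _)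
    rw [List.takeWhile_cons_of_pos (by simp [hap])] at hk'
    rcases List.mem_cons.1 hk' with rfl | hk'
    · exact ⟨fun h' => absurd (lt_trans h' hpa) (lt_irrefl _), fun _ => lt_trans hklt hpa⟩
    · exact hcond k' hk'
  · intro hpa hL
    obtain ⟨hpL, hkL, hfk, hkp, hcond⟩ :=
      (charGen L.length L le_rfl hnd (fun x => decide (p < x)) p k).1 hL
    have hklt : p < k := by simpa using hfk
    refine (charGen (a :: L).length (a :: L) le_rfl hnd' (fun x => decide (p < x)) p k).2
      ⟨List.mem_cons_of_mem _ hpL, List.mem_cons_of_mem _ hkL, hfk, hkp, ?_⟩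
    intro k' hk'
    have hap : a ≠ p := fun e => absurd (e ▸ hpa) (lt_irrefl _)
    rw [List.takeWhile_cons_of_pos (by simp [hap])] at hk'
    rcases List.mem_cons.1 hk' with rfl | hk'
    · exact ⟨fun _ => lt_trans hpa hklt, fun h' => absurd (lt_trans hpa h') (lt_irrefl _)⟩
    · exact hcond k' hk'
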